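/- In the Multicolored Clique reduction (with |U_i| = k², |W_i| = 3k³, and budget k' = C(k,2) + k³): if E_X is a set of at most k' added edges such that G + E_X has dilation at most 3 with respect to Γ, then for each i ∈ [k] and each u ∈ U_i, E_X contains an edge (u,v) with v ∉ ⋃_{j=1}^k U_j. -/

import Mathlib

open SimpleGraph

/-- The weight of a walk in `G`, where each edge `uv` is weighted by the
shortest-path distance `Γ.dist u v` in the (unweighted) graph `Γ`. -/
noncomputable def walkWeight {V : Type*} (Γ G : SimpleGraph V) :
    {x y : V} → G.Walk x y → ℕ
  | x, _, .cons (v := v) _ p => Γ.dist x v + walkWeight Γ G p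
  | _, _, .nil => 0

/-- Weighted shortest-path distance in `G`, with edge weights `Γ.dist`;
`⊤` if there is no walk. -/
noncomputable def wdist {V : Type*} (Γ G : SimpleGraph V) (x y : V) : ℕ∞ :=
  ⨅ p : G.Walk x y, (walkWeight Γ G p : ℕ∞)
/-- Vertices of the Multicolored Clique reduction: the vertices of `H` (`orig`), the
sets `U_i` of size `k²` (`mid`), the sets `W_i` of size `3k³` (`far`), and the
center `ctr = c`. -/
inductive RVert (A : Type*) (k : ℕ) : Type _ where
  | orig : A → RVert A k
  | mid : Fin k → Fin (k ^ 2) → RVert A k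
  | far : Fin k → Fin (3 * k ^ 3) → RVert A k
  | ctr : RVert A k

/-- Adjacency relation generating `Γ`: edges of `H`; all edges between `V_i` and
`U_i`; all edges between `U_i` and `U_j` for `i ≠ j`; all edges between `U_i` and
`W_i`; and all edges from `c` to `V(H) ∪ ⋃ W_i`. -/
def gammaRel {A : Type*} {k : ℕ} (H : SimpleGraph A) (col : A → Fin k) :
    RVert A k → RVert A k → Prop
  | .orig a, .orig b => H.Adj a b
  | .orig a, .mid i _ => col a = i
  | .mid i _, .mid j _ => i ≠ j
  | .mid i _, .far j _ => i = j
  | .ctr, .orig _ => True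
  | .ctr, .far _ _ => True
  | _, _ => False

/-- Adjacency relation generating `G`: only the edges incident to the center `c`. -/
def cRel (A : Type*) (k : ℕ) : RVert A k → RVert A k → Prop
  | .ctr, .orig _ => True
  | .ctr, .far _ _ => True
  | _, _ => False

/-- The metric graph `Γ` of the reduction. -/
def gammaGraph {A : Type*} {k : ℕ} (H : SimpleGraph A) (col : A → Fin k) :
    SimpleGraph (RVert A k) :=
  SimpleGraph.fromRel (gammaRel H col)

/-- The input graph `G` of the reduction (a star centered at `c` plus isolated
vertices). -/
def inputGraph (A : Type*) (k : ℕ) : SimpleGraph (RVert A k) :=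
  SimpleGraph.fromRel (cRel A k)

section Aux
variable {V : Type*} {Γ G : SimpleGraph V}

lemma walkWeight_append {x y z : V} (p : G.Walk x y) (q : G.Walk y z) :
    walkWeight Γ G (p.append q) = walkWeight Γ G p + walkWeight Γ G q := by
  induction p with
  | nil => simp [walkWeight]
  | cons h p ih => simp [walkWeight, ih]; ring

lemma walkWeight_reverse {x y : V} (p : G.Walk x y) :
    walkWeight Γ G p.reverse = walkWeight Γ G p := by
  induction p with
  | nil => rfl
  | cons h p ih =>
    rw [SimpleGraph.Walk.reverse_cons, walkWeight_append, ih]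
    simp [walkWeight, Γ.dist_comm]
    omega

lemma dist_le_walkWeight (hΓ : Γ.Connected) {x y : V} (p : G.Walk x y) :
    Γ.dist x y ≤ walkWeight Γ G p := by
  induction p with
  | nil => simp [walkWeight]
  | @cons a b c h p ih =>
    calc Γ.dist a c ≤ Γ.dist a b + Γ.dist b c := hΓ.dist_triangle
    _ ≤ _ := by simp [walkWeight]; omega

end Aux

section RV
variable {A : Type*} {k : ℕ}

def rvertEquiv (A : Type*) (k : ℕ) :
    RVert A k ≃ (A ⊕ (Fin k × Fin (k ^ 2)) ⊕ (Fin k × Fin (3 * k ^ 3)) ⊕ Unit) where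
  toFun v := match v with
    | .orig a => .inl a
    | .mid i p => .inr (.inl (i, p))
    | .far i q => .inr (.inr (.inl (i, q)))
    | .ctr => .inr (.inr (.inr ()))
  invFun x := match x with
    | .inl a => .orig a
    | .inr (.inl (i, p)) => .mid i p
    | .inr (.inr (.inl (i, q))) => .far i q
    | .inr (.inr (.inr _)) => .ctr
  left_inv v := by cases v <;> rfl
  right_inv x := by rcases x with a | (⟨i, p⟩ | (⟨i, q⟩ | ⟨⟩)) <;> rfl

instance [Finite A] : Finite (RVert A k) := Finite.of_equiv _ (rvertEquiv A k).symm

lemma not_cRel_far_left {v : RVert A k} {i : Fin k} {q : Fin (3 * k ^ 3)} :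
    ¬ cRel A k (.far i q) v := by cases v <;> exact fun h => h

lemma cRel_far_right {v : RVert A k} {i : Fin k} {q : Fin (3 * k ^ 3)}
    (h : cRel A k v (.far i q)) : v = .ctr := by
  cases v
  · exact h.elim
  · exact h.elim
  · exact h.elim
  · rfl

lemma not_cRel_mid_left {v : RVert A k} {i : Fin k} {p : Fin (k ^ 2)} :
    ¬ cRel A k (.mid i p) v := by cases v <;> exact fun h => h

lemma not_cRel_mid_right {v : RVert A k} {i : Fin k} {p : Fin (k ^ 2)} :
    ¬ cRel A k v (.mid i p) := by cases v <;> exact fun h => h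

variable (H : SimpleGraph A) (col : A → Fin k)

lemma gamma_adj_mid_far (i : Fin k) (p : Fin (k ^ 2)) (q : Fin (3 * k ^ 3)) :
    (gammaGraph H col).Adj (.mid i p) (.far i q) := by
  rw [gammaGraph, SimpleGraph.fromRel_adj]
  exact ⟨by simp, Or.inl rfl⟩

lemma gamma_adj_ctr_far (i : Fin k) (q : Fin (3 * k ^ 3)) :
    (gammaGraph H col).Adj .ctr (.far i q) := by
  rw [gammaGraph, SimpleGraph.fromRel_adj]
  exact ⟨by simp, Or.inl trivial⟩

lemma gamma_adj_ctr_orig (a : A) :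
    (gammaGraph H col).Adj .ctr (.orig a) := by
  rw [gammaGraph, SimpleGraph.fromRel_adj]
  exact ⟨by simp, Or.inl trivial⟩

lemma gamma_connected (hk : 1 ≤ k) : (gammaGraph H col).Connected := by
  have hfar : 0 < 3 * k ^ 3 := by positivity
  rw [connected_iff_exists_forall_reachable]
  refine ⟨.ctr, fun v => ?_⟩
  cases v with
  | orig a => exact (gamma_adj_ctr_orig H col a).reachable
  | mid i p =>
    exact ((gamma_adj_ctr_far H col i ⟨0, hfar⟩).reachable).trans
      ((gamma_adj_mid_far H col i p ⟨0, hfar⟩).symm.reachable)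
  | far i q => exact (gamma_adj_ctr_far H col i q).reachable
  | ctr => exact SimpleGraph.Reachable.refl _

lemma gamma_not_adj_mid_ctr (i : Fin k) (p : Fin (k ^ 2)) :
    ¬ (gammaGraph H col).Adj (.mid i p) .ctr := by
  rw [gammaGraph, SimpleGraph.fromRel_adj]
  rintro ⟨-, h | h⟩ <;> exact h

lemma gamma_dist_mid_ctr (hk : 1 ≤ k) (i : Fin k) (p : Fin (k ^ 2)) :
    2 ≤ (gammaGraph H col).dist (.mid i p) .ctr := by
  have h0 : (gammaGraph H col).dist (.mid i p) .ctr ≠ 0 := by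
    have := (gamma_connected H col hk).pos_dist_of_ne (u := RVert.mid i p) (v := .ctr) (by simp)
    omega
  have h1 : (gammaGraph H col).dist (.mid i p) .ctr ≠ 1 := fun h =>
    gamma_not_adj_mid_ctr H col i p (SimpleGraph.dist_eq_one_iff_adj.mp h)
  omega

end RV

lemma exists_untouched {A : Type*} [Fintype A] {k : ℕ} (hk : 2 ≤ k)
    (EX : SimpleGraph (RVert A k))
    (hcard : EX.edgeSet.ncard ≤ Nat.choose k 2 + k ^ 3) (i : Fin k) :
    ∃ q : Fin (3 * k ^ 3), ∀ y, ¬ EX.Adj (.far i q) y := by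
  classical
  by_contra hcon
  push_neg at hcon
  choose f hf using hcon
  cases nonempty_fintype (RVert A k)
  let F : Fin (3 * k ^ 3) → Sym2 (RVert A k) := fun q => s(RVert.far i q, f q)
  have himg : (Finset.univ.image F) ⊆ EX.edgeFinset := by
    intro e he
    simp only [Finset.mem_image, F] at he
    obtain ⟨q, -, rfl⟩ := he
    simpa [SimpleGraph.mem_edgeFinset] using hf q
  have hfiber : ∀ e ∈ Finset.univ.image F,
      (Finset.univ.filter (fun q => F q = e)).card ≤ 2 := by
    intro e _
    induction e using Sym2.ind with
    | _ a b =>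
      have := Finset.card_le_card_of_injOn (fun q => RVert.far i q)
        (t := {a, b}) (s := Finset.univ.filter (fun q => F q = s(a, b)))
        (fun q hq => by
          simp only [Finset.mem_coe, Finset.mem_filter, F] at hq
          have hmem : RVert.far i q ∈ s(a, b) := hq.2 ▸ Sym2.mem_mk_left _ _
          simpa [Finset.mem_insert] using Sym2.mem_iff.mp hmem)
        (fun q _ q' _ h => by
          injection h)
      calc _ ≤ ({a, b} : Finset (RVert A k)).card := this
      _ ≤ 2 := Finset.card_insert_le _ _ |>.trans (by simp)
  have hcount := Finset.card_le_mul_card_image (f := F) Finset.univ 2 hfiber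
  have himgcard : (Finset.univ.image F).card ≤ EX.edgeSet.ncard := by
    rw [Set.ncard_eq_toFinset_card']
    exact (Finset.card_le_card himg).trans (le_of_eq (by simp [SimpleGraph.edgeFinset]))
  have huniv : (Finset.univ : Finset (Fin (3 * k ^ 3))).card = 3 * k ^ 3 := by simp
  have hch : 2 * Nat.choose k 2 ≤ k * (k - 1) := by
    rw [Nat.choose_two_right]; omega
  have hkk : k * (k - 1) < k ^ 3 := by
    calc k * (k - 1) ≤ k * k := Nat.mul_le_mul_left _ (Nat.sub_le k 1)
    _ = k ^ 2 := (sq k).symm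
    _ < k ^ 3 := Nat.pow_lt_pow_right (by omega) (by omega)
  have : 3 * k ^ 3 ≤ 2 * (Nat.choose k 2 + k ^ 3) := by
    calc 3 * k ^ 3 = (Finset.univ : Finset (Fin (3 * k ^ 3))).card := huniv.symm
    _ ≤ 2 * (Finset.univ.image F).card := hcount
    _ ≤ 2 * EX.edgeSet.ncard := by omega
    _ ≤ _ := by omega
  nlinarith [this, hch, hkk]

lemma weight_from_untouched {A : Type*} {k : ℕ} (H : SimpleGraph A) (col : A → Fin k)
    {EX : SimpleGraph (RVert A k)} {i : Fin k} {q : Fin (3 * k ^ 3)} (hk : 1 ≤ k)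
    (hq : ∀ y, ¬ EX.Adj (.far i q) y) {x : RVert A k} (hx : x ≠ .far i q)
    (w : (inputGraph A k ⊔ EX).Walk x (.far i q)) :
    (gammaGraph H col).dist x .ctr + 1 ≤ walkWeight (gammaGraph H col) _ w := by
  have hΓc : (gammaGraph H col).Connected := gamma_connected H col hk
  rw [← walkWeight_reverse]
  generalize w.reverse = wr
  cases wr with
  | nil => exact absurd rfl hx
  | @cons _ z _ h w2 =>
    rw [SimpleGraph.sup_adj] at h
    rcases h with hG | hEX
    · rw [inputGraph, SimpleGraph.fromRel_adj] at hG
      rcases hG.2 with h1 | h2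
      · exact absurd h1 not_cRel_far_left
      · have hz := cRel_far_right h2
        subst hz
        have h1 : 1 ≤ (gammaGraph H col).dist (.far i q) .ctr :=
          hΓc.pos_dist_of_ne (by simp)
        have h2 : (gammaGraph H col).dist .ctr x ≤ walkWeight (gammaGraph H col) _ w2 :=
          dist_le_walkWeight hΓc w2
        rw [(gammaGraph H col).dist_comm (u := x)]
        simp only [walkWeight]
        omega
    · exact absurd hEX (hq z)


/-- In the Multicolored Clique reduction with budget `k' = C(k,2) + k³`: if `E_X` is a
set of at most `k'` added edges such that `G + E_X` has dilation at most `3`, then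
every vertex `u ∈ U_i` is incident to an edge of `E_X` whose other endpoint lies
outside `⋃_j U_j`. -/
theorem solution_edge_leaves_U {A : Type*} [Fintype A]
    (k : ℕ) (hk : 2 ≤ k) (H : SimpleGraph A) (col : A → Fin k)
    (EX : SimpleGraph (RVert A k))
    (hcard : EX.edgeSet.ncard ≤ Nat.choose k 2 + k ^ 3)
    (hdil : ∀ x y : RVert A k,
      wdist (gammaGraph H col) (inputGraph A k ⊔ EX) x y ≤
        (3 : ℕ∞) * ((gammaGraph H col).dist x y : ℕ∞)) :
    ∀ (i : Fin k) (p : Fin (k ^ 2)),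
      ∃ y : RVert A k, EX.Adj (RVert.mid i p) y ∧
        ∀ (j : Fin k) (q : Fin (k ^ 2)), y ≠ RVert.mid j q := by
  intro i p
  by_contra hcon
  push_neg at hcon
  obtain ⟨q, hq⟩ := exists_untouched hk EX hcard i
  have hΓc : (gammaGraph H col).Connected := gamma_connected H col (by omega)
  have hadj := gamma_adj_mid_far H col i p q
  have hd1 : (gammaGraph H col).dist (.mid i p) (.far i q) = 1 :=
    SimpleGraph.dist_eq_one_iff_adj.mpr hadj
  have h4 : (4 : ℕ∞) ≤ wdist (gammaGraph H col) (inputGraph A k ⊔ EX)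
      (.mid i p) (.far i q) := by
    rw [wdist]
    refine le_iInf fun w => ?_
    have h4' : 4 ≤ walkWeight (gammaGraph H col) (inputGraph A k ⊔ EX) w := by
      cases w with
      | @cons _ z _ h w' =>
        have h' := h
        rw [SimpleGraph.sup_adj] at h'
        rcases h' with hG | hEX
        · exfalso
          rw [inputGraph, SimpleGraph.fromRel_adj] at hG
          rcases hG.2 with h1 | h2
          · exact not_cRel_mid_left h1
          · exact not_cRel_mid_right h2
        · obtain ⟨j, r, rfl⟩ := hcon _ hEX
          have h1 : 1 ≤ (gammaGraph H col).dist (.mid i p) (.mid j r) :=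
            hΓc.pos_dist_of_ne hEX.ne
          have h3 : (gammaGraph H col).dist (.mid j r) .ctr + 1 ≤
              walkWeight (gammaGraph H col) _ w' :=
            weight_from_untouched H col (by omega) hq (by simp) w'
          have h2 := gamma_dist_mid_ctr H col (by omega : 1 ≤ k) j r
          simp only [walkWeight]
          omega
    exact_mod_cast h4'
  have hle := hdil (.mid i p) (.far i q)
  rw [hd1] at hle
  have : (4 : ℕ∞) ≤ 3 := le_trans h4 (by simpa using hle)
  norm_num at this
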